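/- arXiv:1811.08195 — 2 statements merged into one kernel-verified Lean document; each statement's English description precedes it below -/
import Mathlib

section
/- Let A be a compact operator on a separable Hilbert space H, g ∈ ran A, (u_n), (v_n) orthonormal bases with projections P_N, Q_N. Suppose f^{(N)} ∈ P_N H satisfy ‖Q_N A P_N f^{(N)} − Q_N g‖ → 0 and sup_N ‖f^{(N)}‖ < ∞. Then the residual satisfies ‖g − A f^{(N)}‖ → 0 as N → ∞. -/
open scoped InnerProductSpace
open Filter Pointwise

/-- Orthogonal projection onto the span of the first `N` vectors of an orthonormal
basis, written as a sum of rank-one operators `∑_{n<N} |u n⟩⟨u n|`. -/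
noncomputable def truncProj {H : Type*} [NormedAddCommGroup H] [InnerProductSpace ℂ H]
    (u : ℕ → H) (N : ℕ) : H →L[ℂ] H :=
  ∑ n ∈ Finset.range N, (innerSL ℂ (u n)).smulRight (u n)

section Aux

variable {H : Type*} [NormedAddCommGroup H] [InnerProductSpace ℂ H] [CompleteSpace H]

lemma truncProj_apply (u : ℕ → H) (N : ℕ) (x : H) :
    truncProj u N x = ∑ n ∈ Finset.range N, (⟪u n, x⟫_ℂ) • u n := by
  simp [truncProj, ContinuousLinearMap.sum_apply]

lemma truncProj_norm_le (v : HilbertBasis ℕ ℂ H) (N : ℕ) (x : H) :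
    ‖truncProj (v : ℕ → H) N x‖ ≤ ‖x‖ := by
  rw [truncProj_apply]
  set c : ℕ → ℂ := fun n => ⟪(v : ℕ → H) n, x⟫_ℂ with hc
  set S : H := ∑ n ∈ Finset.range N, c n • (v : ℕ → H) n with hS
  have hsq : ‖S‖ ^ 2 = ∑ n ∈ Finset.range N, ‖c n‖ ^ 2 := by
    have h1 : (⟪S, S⟫_ℂ) = ∑ n ∈ Finset.range N, (starRingEnd ℂ) (c n) * c n := by
      rw [hS, sum_inner]
      refine Finset.sum_congr rfl fun i hi => ?_
      rw [inner_smul_left, v.orthonormal.inner_right_sum c hi]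
    have h2 : ‖S‖ ^ 2 = RCLike.re (⟪S, S⟫_ℂ) := by
      rw [← @inner_self_eq_norm_sq ℂ]
    rw [h2, h1, map_sum]
    refine Finset.sum_congr rfl fun i _ => ?_
    rw [RCLike.conj_mul]
    norm_cast
  have hle : ∑ n ∈ Finset.range N, ‖c n‖ ^ 2 ≤ ‖x‖ ^ 2 :=
    v.orthonormal.sum_inner_products_le x
  have h3 : ‖S‖ ^ 2 ≤ ‖x‖ ^ 2 := by rw [hsq]; exact hle
  nlinarith [norm_nonneg S, norm_nonneg x]

lemma truncProj_tendsto (v : HilbertBasis ℕ ℂ H) (x : H) :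
    Tendsto (fun N => truncProj (v : ℕ → H) N x) atTop (nhds x) := by
  have h := (v.hasSum_repr x).tendsto_sum_nat
  convert h using 2 with N
  rw [truncProj_apply]
  exact Finset.sum_congr rfl fun n _ => by rw [v.repr_apply_apply]

lemma truncProj_fixed (u : HilbertBasis ℕ ℂ H) (N : ℕ) {x : H}
    (hx : x ∈ Submodule.span ℂ ((u : ℕ → H) '' Set.Iio N)) :
    truncProj (u : ℕ → H) N x = x := by
  induction hx using Submodule.span_induction with
  | mem y hy =>
    obtain ⟨m, hm, rfl⟩ := hy
    rw [truncProj_apply, Finset.sum_eq_single m]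
    · rw [orthonormal_iff_ite.mp u.orthonormal, if_pos rfl, one_smul]
    · intro n _ hnm
      rw [orthonormal_iff_ite.mp u.orthonormal, if_neg hnm, zero_smul]
    · intro hm'
      exact absurd (Finset.mem_range.mpr hm) hm'
  | zero => simp
  | add y z _ _ hy hz => rw [map_add, hy, hz]
  | smul a y _ hy => rw [map_smul, hy]

end Aux

/-- Compact case: if the truncated residuals vanish and the approximants are uniformly
bounded, then the infinite-dimensional residual vanishes in norm. -/
theorem stmt5 (H : Type*) [NormedAddCommGroup H] [InnerProductSpace ℂ H]
    [CompleteSpace H] (hinf : ¬ FiniteDimensional ℂ H)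
    (A : H →L[ℂ] H) (hA : IsCompactOperator A)
    (g : H) (hg : g ∈ Set.range A)
    (u v : HilbertBasis ℕ ℂ H)
    (f : ℕ → H)
    (hmem : ∀ N : ℕ, f N ∈ Submodule.span ℂ ((u : ℕ → H) '' Set.Iio N))
    (hbdd : ∃ C : ℝ, ∀ N : ℕ, ‖f N‖ ≤ C)
    (hres : Tendsto (fun N : ℕ =>
        ‖truncProj (v : ℕ → H) N (A (truncProj (u : ℕ → H) N (f N)))
          - truncProj (v : ℕ → H) N g‖) atTop (nhds 0)) :
    Tendsto (fun N : ℕ => ‖g - A (f N)‖) atTop (nhds 0) := by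
  obtain ⟨C, hC⟩ := hbdd
  have hC0 : 0 ≤ C := le_trans (norm_nonneg (f 0)) (hC 0)
  obtain ⟨K, hK, hKmem⟩ := hA
  obtain ⟨ε, hε, hball⟩ := Metric.mem_nhds_iff.1 hKmem
  set r : ℝ := ε / (2 * (C + 1)) with hr
  have hr0 : 0 < r := by positivity
  have hrC : r ≠ 0 := ne_of_gt hr0
  set K' : Set H := ((r : ℂ))⁻¹ • K with hK'def
  have hK' : IsCompact K' := hK.smul _
  have hmemK' : ∀ N, A (f N) ∈ K' := by
    intro N
    have h1 : (r : ℂ) • f N ∈ Metric.ball (0 : H) ε := by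
      rw [Metric.mem_ball, dist_zero_right, norm_smul]
      have : ‖(r : ℂ)‖ = r := by
        rw [Complex.norm_real, Real.norm_of_nonneg hr0.le]
      rw [this]
      have h2 : r * ‖f N‖ ≤ r * C := by
        apply mul_le_mul_of_nonneg_left (hC N) hr0.le
      have h3 : r * C < ε := by
        rw [hr]
        rw [div_mul_eq_mul_div, mul_comm]
        rw [div_lt_iff₀ (by positivity)]
        nlinarith
      linarith
    have h2 : A ((r : ℂ) • f N) ∈ K := hball h1
    have h3 : A (f N) = ((r : ℂ))⁻¹ • A ((r : ℂ) • f N) := by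
      rw [map_smul, smul_smul, inv_mul_cancel₀ (by exact_mod_cast hrC), one_smul]
    rw [h3]
    exact Set.smul_mem_smul_set h2
  have huniform : ∀ δ > (0 : ℝ), ∀ᶠ N in atTop, ∀ y ∈ K',
      ‖y - truncProj (v : ℕ → H) N y‖ < δ := by
    intro δ hδ
    obtain ⟨t, hts, htf, hcover⟩ := hK'.finite_cover_balls (show (0:ℝ) < δ/4 by linarith)
    have hev : ∀ᶠ N in atTop, ∀ c ∈ t, ‖c - truncProj (v : ℕ → H) N c‖ < δ/4 := by
      rw [eventually_all_finite htf]
      intro c hc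
      have h0 : Tendsto (fun N => c - truncProj (v : ℕ → H) N c) atTop (nhds (c - c)) :=
        Tendsto.sub tendsto_const_nhds (truncProj_tendsto v c)
      rw [sub_self] at h0
      have h1 : Tendsto (fun N => ‖c - truncProj (v : ℕ → H) N c‖) atTop (nhds 0) := by
        simpa using h0.norm
      exact h1.eventually_lt_const (by linarith)
    filter_upwards [hev] with N hN y hy
    obtain ⟨c, hc, hyc⟩ := Set.mem_iUnion₂.1 (hcover hy)
    have hdist : ‖y - c‖ < δ/4 := by
      rw [← dist_eq_norm]; exact Metric.mem_ball.1 hyc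
    have heq : y - truncProj (v : ℕ → H) N y =
        ((y - c) - truncProj (v : ℕ → H) N (y - c)) + (c - truncProj (v : ℕ → H) N c) := by
      rw [map_sub]; abel
    calc ‖y - truncProj (v : ℕ → H) N y‖
        ≤ ‖(y - c) - truncProj (v : ℕ → H) N (y - c)‖ + ‖c - truncProj (v : ℕ → H) N c‖ := by
          rw [heq]; exact norm_add_le _ _
      _ ≤ (‖y - c‖ + ‖truncProj (v : ℕ → H) N (y - c)‖) + ‖c - truncProj (v : ℕ → H) N c‖ := by
          gcongr; exact norm_sub_le _ _
      _ ≤ (‖y - c‖ + ‖y - c‖) + ‖c - truncProj (v : ℕ → H) N c‖ := by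
          gcongr; exact truncProj_norm_le v N _
      _ < δ := by have := hN c hc; linarith
  have hQg : Tendsto (fun N => ‖g - truncProj (v : ℕ → H) N g‖) atTop (nhds 0) := by
    have h0 : Tendsto (fun N => g - truncProj (v : ℕ → H) N g) atTop (nhds (g - g)) :=
      Tendsto.sub tendsto_const_nhds (truncProj_tendsto v g)
    rw [sub_self] at h0
    simpa using h0.norm
  have hQA : Tendsto (fun N => ‖A (f N) - truncProj (v : ℕ → H) N (A (f N))‖) atTop (nhds 0) := by
    rw [NormedAddCommGroup.tendsto_nhds_zero]
    intro ε' hε'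
    filter_upwards [huniform ε' hε'] with N hN
    rw [Real.norm_of_nonneg (norm_nonneg _)]
    exact hN _ (hmemK' N)
  have key : ∀ N, ‖g - A (f N)‖ ≤
      (‖g - truncProj (v : ℕ → H) N g‖ + ‖A (f N) - truncProj (v : ℕ → H) N (A (f N))‖)
      + ‖truncProj (v : ℕ → H) N (A (truncProj (u : ℕ → H) N (f N)))
          - truncProj (v : ℕ → H) N g‖ := by
    intro N
    rw [truncProj_fixed u N (hmem N)]
    have heq : g - A (f N) =
        ((g - truncProj (v : ℕ → H) N g) - (A (f N) - truncProj (v : ℕ → H) N (A (f N))))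
        - (truncProj (v : ℕ → H) N (A (f N)) - truncProj (v : ℕ → H) N g) := by abel
    rw [heq]
    refine le_trans (norm_sub_le _ _) ?_
    gcongr
    exact norm_sub_le _ _
  refine squeeze_zero (fun N => norm_nonneg _) key ?_
  simpa using (hQg.add hQA).add hres
end

section
/- Let R be the right-shift on ℓ²(ℕ) and m ≥ 1. The closure of the Krylov subspace K(R, e_{m+1}) = span{R^k e_{m+1} : k ≥ 0} equals span{e_1, ..., e_m}^⊥; in particular the exact solution f = e_m of R f = e_{m+1} does not belong to the closure of K(R, e_{m+1}). -/
open scoped InnerProductSpace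
open Filter

/-- Membership in the orthogonal complement of a span, checked on generators. -/
lemma mem_orthogonal_span_of_forall {H : Type*} [NormedAddCommGroup H]
    [InnerProductSpace ℂ H] {T : Set H} {v : H} (h : ∀ t ∈ T, ⟪t, v⟫_ℂ = 0) :
    v ∈ (Submodule.span ℂ T)ᗮ := by
  rw [Submodule.mem_orthogonal]
  intro u hu
  induction hu using Submodule.span_induction with
  | mem x hx => exact h x hx
  | zero => simp
  | add x y _ _ hx hy => rw [inner_add_left, hx, hy, add_zero]
  | smul c x _ hx => rw [inner_smul_left, hx, mul_zero]

/-- For the right shift `R` on `ℓ²(ℕ)` (basis indexed from `0`, so `e (k-1)` is the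
`k`-th basis vector) and `m ≥ 1`, the closure of the Krylov subspace
`K(R, e_{m+1}) = span{R^k e_{m+1}}` equals `span{e_1,…,e_m}ᗮ`; in particular the
exact solution `e_m` of `R f = e_{m+1}` does not belong to this closure. -/
theorem stmt14 (H : Type*) [NormedAddCommGroup H] [InnerProductSpace ℂ H]
    [CompleteSpace H] (e : HilbertBasis ℕ ℂ H)
    (R : H →L[ℂ] H) (hR : ∀ n : ℕ, R (e n) = e (n + 1))
    (m : ℕ) (hm : 1 ≤ m) :
    (Submodule.span ℂ (Set.range fun k : ℕ => (R ^ k) (e m))).topologicalClosure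
        = (Submodule.span ℂ ((e : ℕ → H) '' Set.Iio m))ᗮ ∧
      e (m - 1) ∉
        (Submodule.span ℂ (Set.range fun k : ℕ => (R ^ k) (e m))).topologicalClosure := by
  have hon : Orthonormal ℂ (e : ℕ → H) := e.orthonormal
  have hRk : ∀ k : ℕ, (R ^ k) (e m) = e (m + k) := by
    intro k
    induction k with
    | zero => simp
    | succ k ih =>
      rw [pow_succ', ContinuousLinearMap.mul_apply, ih, hR]
      congr 1
  -- The Krylov set is the tail of the basis
  have hset : (Set.range fun k : ℕ => (R ^ k) (e m)) = (e : ℕ → H) '' {n | m ≤ n} := by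
    ext x
    constructor
    · rintro ⟨k, rfl⟩
      exact ⟨m + k, Nat.le_add_right m k, (hRk k).symm⟩
    · rintro ⟨n, hn, rfl⟩
      exact ⟨n - m, by simp only []; rw [hRk]; congr 1; exact Nat.add_sub_cancel' hn⟩
  set K := Submodule.span ℂ ((e : ℕ → H) '' {n | m ≤ n}) with hK
  rw [hset]
  have hsub : K.topologicalClosure = (Submodule.span ℂ ((e : ℕ → H) '' Set.Iio m))ᗮ := by
    apply le_antisymm
    · refine Submodule.topologicalClosure_minimal _ ?_ (Submodule.isClosed_orthogonal _)
      rw [Submodule.span_le]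
      rintro x ⟨n, hn, rfl⟩
      refine mem_orthogonal_span_of_forall ?_
      rintro t ⟨j, hj, rfl⟩
      simp only [Set.mem_Iio] at hj
      simp only [Set.mem_setOf_eq] at hn
      exact hon.2 (show j ≠ n by omega)
    · intro x hx
      have hterm : ∀ i : ℕ, (e.repr x i : ℂ) • e i ∈ K := by
        intro i
        by_cases hi : m ≤ i
        · exact Submodule.smul_mem _ _ (Submodule.subset_span ⟨i, hi, rfl⟩)
        · have : (e.repr x i : ℂ) = 0 := by
            rw [e.repr_apply_apply]
            exact (Submodule.mem_orthogonal _ _).1 hx _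
              (Submodule.subset_span ⟨i, by simp; omega, rfl⟩)
          simp [this]
      have hsum := e.hasSum_repr x
      exact mem_closure_of_tendsto hsum (Eventually.of_forall fun s =>
        Submodule.sum_mem _ fun i _ => hterm i)
  refine ⟨hsub, ?_⟩
  rw [hsub]
  intro hmem
  have h1 : e (m - 1) ∈ Submodule.span ℂ ((e : ℕ → H) '' Set.Iio m) :=
    Submodule.subset_span ⟨m - 1, by simp; omega, rfl⟩
  have := (Submodule.mem_orthogonal _ _).1 hmem _ h1
  have h2 := hon.1 (m - 1)
  rw [inner_self_eq_zero.mp this] at h2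
  simp at h2
end
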